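/- For every integer k ≥ 3, the unique root r(k) ∈ (0,1) of B_k(r) = −1 − 2r + 2kr − r² − (1−r)^k/(1+r)^{k−2} is a simple root, i.e., B_k'(r(k)) ≠ 0. -/

import Mathlib

theorem root_is_simple (k : ℕ) (hk : 3 ≤ k) (r : ℝ) (hr0 : 0 < r) (hr1 : r < 1)
    (hroot : -1 - 2 * r + 2 * k * r - r ^ 2 - (1 - r) ^ k / (1 + r) ^ (k - 2) = 0) :
    deriv (fun s : ℝ =>
      -1 - 2 * s + 2 * k * s - s ^ 2 - (1 - s) ^ k / (1 + s) ^ (k - 2)) r ≠ 0 := by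
  have h1r : (0:ℝ) < 1 - r := by linarith
  have h1p : (0:ℝ) < 1 + r := by linarith
  have hvne : (1 + r) ^ (k - 2) ≠ 0 := pow_ne_zero _ (by linarith)
  have hu : HasDerivAt (fun s : ℝ => (1 - s) ^ k)
      (↑k * (1 - r) ^ (k - 1) * (0 - 1)) r :=
    ((hasDerivAt_const r (1:ℝ)).sub (hasDerivAt_id r)).pow k
  have hv : HasDerivAt (fun s : ℝ => (1 + s) ^ (k - 2))
      (↑(k - 2) * (1 + r) ^ (k - 2 - 1) * (0 + 1)) r :=
    ((hasDerivAt_const r (1:ℝ)).add (hasDerivAt_id r)).pow (k - 2)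
  have hq := hu.div hv hvne
  have hp : HasDerivAt (fun s : ℝ => -1 - 2 * s + 2 * ↑k * s - s ^ 2)
      (0 - 2 * 1 + 2 * ↑k * 1 - ↑2 * r ^ (2 - 1)) r :=
    (((hasDerivAt_const r (-1:ℝ)).sub ((hasDerivAt_id r).const_mul 2)).add
      ((hasDerivAt_id r).const_mul (2 * (k:ℝ)))).sub (hasDerivAt_pow 2 r)
  have htot := hp.sub hq
  rw [show (fun s : ℝ => -1 - 2 * s + 2 * k * s - s ^ 2 - (1 - s) ^ k / (1 + s) ^ (k - 2)) = ((fun s : ℝ => -1 - 2 * s + 2 * ↑k * s - s ^ 2) - (fun s : ℝ => (1 - s) ^ k) / fun s : ℝ => (1 + s) ^ (k - 2)) from rfl, htot.deriv]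
  have hk3 : (3:ℝ) ≤ (k:ℝ) := by exact_mod_cast hk
  -- the subtracted quotient has nonpositive numerator
  have hnum : (↑k * (1 - r) ^ (k - 1) * (0 - 1)) * (1 + r) ^ (k - 2)
      - (1 - r) ^ k * (↑(k - 2) * (1 + r) ^ (k - 2 - 1) * (0 + 1)) ≤ 0 := by
    have t1 : (0:ℝ) ≤ ↑k * (1 - r) ^ (k - 1) * (1 + r) ^ (k - 2) := by
      have := pow_pos h1r (k - 1)
      have := pow_pos h1p (k - 2)
      have : (0:ℝ) ≤ (k:ℝ) := by positivity
      positivity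
    have t2 : (0:ℝ) ≤ (1 - r) ^ k * (↑(k - 2) * (1 + r) ^ (k - 2 - 1)) := by
      have hk2 : (0:ℝ) ≤ ((k - 2 : ℕ) : ℝ) := Nat.cast_nonneg _
      exact mul_nonneg (pow_pos h1r k).le (mul_nonneg hk2 (pow_pos h1p _).le)
    nlinarith
  have hden : (0:ℝ) < ((1 + r) ^ (k - 2)) ^ 2 := by positivity
  have hquot : ((↑k * (1 - r) ^ (k - 1) * (0 - 1)) * (1 + r) ^ (k - 2)
      - (1 - r) ^ k * (↑(k - 2) * (1 + r) ^ (k - 2 - 1) * (0 + 1)))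
      / ((1 + r) ^ (k - 2)) ^ 2 ≤ 0 :=
    div_nonpos_of_nonpos_of_nonneg hnum hden.le
  have hpos : (0:ℝ) < 0 - 2 * 1 + 2 * ↑k * 1 - ↑2 * r ^ (2 - 1) := by
    norm_num
    nlinarith
  have : (0:ℝ) < (0 - 2 * 1 + 2 * ↑k * 1 - ↑2 * r ^ (2 - 1))
      - ((↑k * (1 - r) ^ (k - 1) * (0 - 1)) * (1 + r) ^ (k - 2)
      - (1 - r) ^ k * (↑(k - 2) * (1 + r) ^ (k - 2 - 1) * (0 + 1)))
      / ((1 + r) ^ (k - 2)) ^ 2 := by linarith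
  exact ne_of_gt this
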